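/- Let N ≥ 1, n ∈ ℤ, c ∈ ℝ with c ≠ 0, and set a = ic. Let p_1,…,p_N ∈ ℂ with |p_i| = 1, p_i ≠ ic, and p_i + p̄_j* ≠ 0 for all i,j (where * denotes complex conjugation), and let ξ_{10},…,ξ_{N0} ∈ ℂ. Define, for real variables (x_1, t_a), ξ_i = p_i x_1 + t_a/(p_i − ic) + ξ_{i0}, and the tau function τ_n(x_1, t_a) = det( δ_{ij} + (−p_i/p_j*)^n · e^{ξ_i + ξ_j*} / (p_i + p_j*) )_{1≤i,j≤N}. Then the complex conjugate of τ_n equals τ_{−n}: (τ_n)* = τ_{−n} for all real x_1, t_a. -/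

import Mathlib

noncomputable section

/-- The reduced phase `ξ_i = p_i x_1 + t_a/(p_i − ic) + ξ_{i0}`. -/
def xiph {N : ℕ} (c : ℝ) (p xi0 : Fin N → ℂ) (i : Fin N) (x1 ta : ℝ) : ℂ :=
  p i * (x1 : ℂ) + (ta : ℂ) / (p i - Complex.I * (c : ℂ)) + xi0 i

/-- The reduced tau function
`τ_n = det(δ_{ij} + (−p_i/p_j*)^n e^{ξ_i + ξ_j*}/(p_i + p_j*))`. -/
def taun {N : ℕ} (c : ℝ) (p xi0 : Fin N → ℂ) (n : ℤ) (x1 ta : ℝ) : ℂ :=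
  Matrix.det (Matrix.of fun i j : Fin N =>
    (if i = j then (1 : ℂ) else 0) +
      (-(p i) / starRingEnd ℂ (p j)) ^ n *
        Complex.exp (xiph c p xi0 i x1 ta + starRingEnd ℂ (xiph c p xi0 j x1 ta))
        / (p i + starRingEnd ℂ (p j)))

/-- the complex-conjugacy reduction `(τ_n)* = τ_{−n}`. -/
theorem tau_conjugation_reduction (N : ℕ) (hN : 1 ≤ N) (n : ℤ) (c : ℝ) (hc : c ≠ 0)
    (p xi0 : Fin N → ℂ)
    (hunit : ∀ i : Fin N, ‖p i‖ = 1)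
    (hpi : ∀ i : Fin N, p i ≠ Complex.I * (c : ℂ))
    (hsum : ∀ i j : Fin N, p i + starRingEnd ℂ (p j) ≠ 0) :
    ∀ x1 ta : ℝ, starRingEnd ℂ (taun c p xi0 n x1 ta) = taun c p xi0 (-n) x1 ta := by
  intro x1 ta
  have h : (starRingEnd ℂ) (taun c p xi0 n x1 ta) = star (taun c p xi0 n x1 ta) := rfl
  rw [h]
  unfold taun
  rw [← Matrix.det_conjTranspose]
  congr 1
  ext i j
  simp only [Matrix.conjTranspose_apply, Matrix.of_apply, star_add, star_div₀, star_mul',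
    apply_ite (star : ℂ → ℂ), star_one, star_zero, Complex.star_def, map_zpow₀, map_neg,
    map_div₀, map_add, Complex.conj_conj, ← Complex.exp_conj]
  congr 1
  · simp [eq_comm]
  congr 1
  rw [zpow_neg, ← inv_zpow, inv_div, div_neg, neg_div, add_comm (starRingEnd ℂ (xiph c p xi0 j x1 ta))]
  exact add_comm _ _
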